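/- arXiv:2101.11584 — 3 statements merged into one kernel-verified Lean document; each statement's English description precedes it below -/
import Mathlib

section
/- Let {M¹_L} →(ξ¹) {M²_L} →(ξ²) {M³_L} →(ξ³) {M⁴_L} be a sequence of controlled homomorphisms between inductive systems over ℝ≥0 that is asymptotically exact at {M²_L} and at {M³_L}. If ξ¹ and ξ³ are both controlled equivalent to the zero homomorphism, then there exists a controlled homomorphism s : {M³_L} → {M²_L} such that ξ²∘s and s∘ξ² are each controlled equivalent to the identity. -/
open scoped NNReal
open Filter

/-- An inductive system of abelian groups over `ℝ≥0`. -/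
structure IndSys where
  M : ℝ≥0 → Type*
  inst : ∀ L, AddCommGroup (M L)
  map : ∀ {L L' : ℝ≥0}, L ≤ L' → (M L →+ M L')
  map_refl : ∀ (L : ℝ≥0) (x : M L), map (le_refl L) x = x
  map_comp : ∀ {L L' L'' : ℝ≥0} (h : L ≤ L') (h' : L' ≤ L'') (x : M L),
    map h' (map h x) = map (h.trans h') x

attribute [instance] IndSys.inst

/-- A control function: non-decreasing and tending to infinity. -/
def IsControl (F : ℝ≥0 → ℝ≥0) : Prop := Monotone F ∧ Tendsto F atTop atTop

/-- A controlled homomorphism between inductive systems, with control function `F`. -/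
structure CtrlHom (M N : IndSys) (F : ℝ≥0 → ℝ≥0) where
  ctrl : IsControl F
  f : ∀ L, M.M L →+ N.M (F L)
  compat : ∀ {L L' : ℝ≥0} (h : L ≤ L') (x : M.M L),
    N.map (ctrl.1 h) (f L x) = f L' (M.map h x)

/-- The identity controlled homomorphism, with control function `L ↦ L`. -/
def CtrlHom.id (M : IndSys) : CtrlHom M M (fun L => L) where
  ctrl := ⟨monotone_id, tendsto_id⟩
  f L := AddMonoidHom.id _
  compat _ _ := rfl

/-- The zero controlled homomorphism, with control function `L ↦ L`. -/
def CtrlHom.zero (M N : IndSys) : CtrlHom M N (fun L => L) where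
  ctrl := ⟨monotone_id, tendsto_id⟩
  f _ := 0
  compat _ _ := by simp

/-- Composition of controlled homomorphisms: `(ξ ∘ η)_L = ξ_{G(L)} ∘ η_L`, control `F ∘ G`. -/
def CtrlHom.comp {M N P : IndSys} {F G : ℝ≥0 → ℝ≥0}
    (ξ : CtrlHom N P F) (η : CtrlHom M N G) : CtrlHom M P (fun L => F (G L)) where
  ctrl := ⟨ξ.ctrl.1.comp η.ctrl.1, ξ.ctrl.2.comp η.ctrl.2⟩
  f L := (ξ.f (G L)).comp (η.f L)
  compat h x := by
    simp only [AddMonoidHom.comp_apply]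
    rw [ξ.compat (η.ctrl.1 h), η.compat h]

/-- `ξ` is controlled equivalent to `η` (for some control function `H ≥ F, G`). -/
def CtrlEquiv {M N : IndSys} {F G : ℝ≥0 → ℝ≥0} (ξ : CtrlHom M N F) (η : CtrlHom M N G) :
    Prop :=
  ∃ H : ℝ≥0 → ℝ≥0, IsControl H ∧
    ∃ (hF : ∀ L, F L ≤ H L) (hG : ∀ L, G L ≤ H L),
      ∀ (L : ℝ≥0) (x : M.M L), N.map (hF L) (ξ.f L x) = N.map (hG L) (η.f L x)

/-- `ξ` is controlled equivalent to the zero homomorphism. -/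
def CtrlEquivZero {M N : IndSys} {F : ℝ≥0 → ℝ≥0} (ξ : CtrlHom M N F) : Prop :=
  CtrlEquiv ξ (CtrlHom.zero M N)

/-- `ξ` is controlled equivalent to the identity homomorphism. -/
def CtrlEquivId {M : IndSys} {F : ℝ≥0 → ℝ≥0} (ξ : CtrlHom M M F) : Prop :=
  CtrlEquiv ξ (CtrlHom.id M)

/-- The sequence `M →(ξ) N →(η) P` is asymptotically exact at `N` with control functions
`F₁, F₂`. -/
def AsympExactAt {M N P : IndSys} {F G : ℝ≥0 → ℝ≥0}
    (ξ : CtrlHom M N F) (η : CtrlHom N P G) (F₁ F₂ : ℝ≥0 → ℝ≥0) : Prop :=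
  (IsControl F₁ ∧
    ∃ (h₁ : ∀ L, G (F L) ≤ F₁ L) (_h₂ : ∀ L, L ≤ F₁ L),
      ∀ (L : ℝ≥0) (x : M.M L), P.map (h₁ L) (η.f (F L) (ξ.f L x)) = 0) ∧
  (IsControl F₂ ∧
    ∃ hle : ∀ L, L ≤ F (F₂ L),
      ∀ (L : ℝ≥0) (m' : N.M L), η.f L m' = 0 →
        ∃ m : M.M (F₂ L), ξ.f (F₂ L) m = N.map (hle L) m')


/-- A pseudo-inverse of a control function. -/
noncomputable def invc (F : ℝ≥0 → ℝ≥0) (y : ℝ≥0) : ℝ≥0 := sInf {x | y ≤ F x} + 1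

lemma invc_nonempty {F : ℝ≥0 → ℝ≥0} (hF : IsControl F) (y : ℝ≥0) :
    {x | y ≤ F x}.Nonempty := (hF.2.eventually_ge_atTop y).exists

lemma invc_mono {F : ℝ≥0 → ℝ≥0} (hF : IsControl F) : Monotone (invc F) := by
  intro a b hab
  unfold invc
  have hsub : {x | b ≤ F x} ⊆ {x | a ≤ F x} := fun x hx => hab.trans hx
  exact add_le_add_left (csInf_le_csInf (OrderBot.bddBelow _) (invc_nonempty hF b) hsub) 1

lemma le_invc_apply {F : ℝ≥0 → ℝ≥0} (hF : IsControl F) (y : ℝ≥0) : y ≤ F (invc F y) := by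
  obtain ⟨z, hz, hlt⟩ := exists_lt_of_csInf_lt (invc_nonempty hF y)
    (lt_add_of_pos_right (sInf {x | y ≤ F x}) one_pos)
  exact hz.trans (hF.1 hlt.le)

/-- An inductive system is uniformly controlled with uniform control pair `(L₀, F)`. -/
def UnifCtrlPair (M : IndSys) (L₀ : ℝ≥0) (F : ℝ≥0 → ℝ≥0) : Prop :=
  IsControl F ∧
  ∃ hle : ∀ L, L ≤ F L,
    (∀ L : ℝ≥0, L₀ ≤ L → ∀ (L' : ℝ≥0) (x : M.M L'),
      ∃ (y : M.M L) (L'' : ℝ≥0) (h : L ≤ L'') (h' : L' ≤ L''), M.map h y = M.map h' x) ∧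
    (∀ (L : ℝ≥0) (x : M.M L), (∃ (L' : ℝ≥0) (h : L ≤ L'), M.map h x = 0) →
      M.map (hle L) x = 0)

/-- An inductive system is uniformly controlled. -/
def UnifCtrl (M : IndSys) : Prop := ∃ (L₀ : ℝ≥0) (F : ℝ≥0 → ℝ≥0), UnifCtrlPair M L₀ F

/-- if the outer maps of an asymptotically exact sequence are controlled
equivalent to zero, then the middle map is a controlled isomorphism. -/
theorem stmt16 (M₁ M₂ M₃ M₄ : IndSys) (F₁ F₂ F₃ : ℝ≥0 → ℝ≥0)
    (ξ₁ : CtrlHom M₁ M₂ F₁) (ξ₂ : CtrlHom M₂ M₃ F₂) (ξ₃ : CtrlHom M₃ M₄ F₃)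
    (hex₂ : ∃ E E' : ℝ≥0 → ℝ≥0, AsympExactAt ξ₁ ξ₂ E E')
    (hex₃ : ∃ E E' : ℝ≥0 → ℝ≥0, AsympExactAt ξ₂ ξ₃ E E')
    (hz₁ : CtrlEquivZero ξ₁) (hz₃ : CtrlEquivZero ξ₃) :
    ∃ (Fs : ℝ≥0 → ℝ≥0) (s : CtrlHom M₃ M₂ Fs),
      CtrlEquivId (ξ₂.comp s) ∧ CtrlEquivId (s.comp ξ₂) := by
  -- Destructure the hypotheses
  obtain ⟨_, A₂, -, hA₂c, hleA, exA⟩ := hex₂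
  obtain ⟨_, B₂, -, hB₂c, hleB, exB⟩ := hex₃
  obtain ⟨H₁, hH₁c, hFH₁, hGH₁, hz₁'⟩ := hz₁
  obtain ⟨H₃, hH₃c, hFH₃, hGH₃, hz₃'⟩ := hz₃
  have hz₁0 : ∀ (L) (x : M₁.M L), M₂.map (hFH₁ L) (ξ₁.f L x) = 0 := by
    intro L x
    have := hz₁' L x
    simpa [CtrlHom.zero] using this
  have hz₃0 : ∀ (L) (x : M₃.M L), M₄.map (hFH₃ L) (ξ₃.f L x) = 0 := by
    intro L x
    have := hz₃' L x
    simpa [CtrlHom.zero] using this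
  -- Basic control functions
  set G₃ : ℝ≥0 → ℝ≥0 := fun L => invc F₃ (H₃ L) ⊔ L with hG₃def
  set K : ℝ≥0 → ℝ≥0 := fun L => B₂ (G₃ L) with hKdef
  set T : ℝ≥0 → ℝ≥0 := fun L => H₁ (A₂ L) with hTdef
  set S : ℝ≥0 → ℝ≥0 := fun L => T (K L) with hSdef
  have hG₃mono : Monotone G₃ := ((invc_mono ξ₃.ctrl).comp hH₃c.1).sup monotone_id
  have hG₃id : ∀ L, L ≤ G₃ L := fun L => le_sup_right
  have hG₃tend : Tendsto G₃ atTop atTop := tendsto_atTop_mono hG₃id tendsto_id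
  have hH₃F₃ : ∀ L, H₃ L ≤ F₃ (G₃ L) :=
    fun L => (le_invc_apply ξ₃.ctrl (H₃ L)).trans (ξ₃.ctrl.1 le_sup_left)
  have hT : ∀ L, L ≤ T L := fun L => (hleA L).trans (hFH₁ (A₂ L))
  have hTmono : Monotone T := hH₁c.1.comp hA₂c.1
  have hKmono : Monotone K := hB₂c.1.comp hG₃mono
  have hSmono : Monotone S := hTmono.comp hKmono
  have hStend : Tendsto S atTop atTop :=
    hH₁c.2.comp (hA₂c.2.comp (hB₂c.2.comp hG₃tend))
  have hKle : ∀ L, L ≤ F₂ (K L) := fun L => (hG₃id L).trans (hleB (G₃ L))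
  have hKS : ∀ L, K L ≤ S L := fun L => hT (K L)
  -- Key "kill" lemma: anything killed by ξ₂ dies after pushing by T
  have kill : ∀ (L) (d : M₂.M L), ξ₂.f L d = 0 → M₂.map (hT L) d = 0 := by
    intro L d hd
    obtain ⟨n, hn⟩ := exA L d hd
    have h := hz₁0 (A₂ L) n
    rw [hn, M₂.map_comp] at h
    exact h
  -- Every element of M₃ lifts (after pushing) to M₂
  have key : ∀ (L) (x : M₃.M L), ∃ m : M₂.M (K L), ξ₂.f (K L) m = M₃.map (hKle L) x := by
    intro L x
    have hx : ξ₃.f (G₃ L) (M₃.map (hG₃id L) x) = 0 := by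
      rw [← ξ₃.compat (hG₃id L) x]
      have h1 : M₄.map (ξ₃.ctrl.1 (hG₃id L)) (ξ₃.f L x)
          = M₄.map (hH₃F₃ L) (M₄.map (hFH₃ L) (ξ₃.f L x)) := by
        rw [M₄.map_comp]
      rw [h1, hz₃0, map_zero]
    obtain ⟨m, hm⟩ := exB (G₃ L) _ hx
    refine ⟨m, ?_⟩
    rw [hm, M₃.map_comp]
  choose σ hσ using key
  -- The section s
  let s : CtrlHom M₃ M₂ S :=
    { ctrl := ⟨hSmono, hStend⟩
      f := fun L => AddMonoidHom.mk' (fun x => M₂.map (hKS L) (σ L x)) (by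
        intro x y
        have hd : ξ₂.f (K L) (σ L (x + y) - σ L x - σ L y) = 0 := by
          simp only [map_sub, hσ, map_add]
          abel
        have h2 := kill (K L) _ hd
        rw [map_sub, map_sub, sub_sub, sub_eq_zero] at h2
        exact h2)
      compat := by
        intro L L' h x
        show M₂.map (hSmono h) (M₂.map (hKS L) (σ L x))
            = M₂.map (hKS L') (σ L' (M₃.map h x))
        have hd : ξ₂.f (K L') (M₂.map (hKmono h) (σ L x) - σ L' (M₃.map h x)) = 0 := by
          rw [map_sub, ← ξ₂.compat (hKmono h) (σ L x), hσ, hσ, M₃.map_comp, M₃.map_comp]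
          exact sub_eq_zero_of_eq rfl
        have h2 := kill (K L') _ hd
        rw [map_sub, sub_eq_zero] at h2
        calc M₂.map (hSmono h) (M₂.map (hKS L) (σ L x))
            = M₂.map (hT (K L')) (M₂.map (hKmono h) (σ L x)) := by
              rw [M₂.map_comp, M₂.map_comp]
          _ = M₂.map (hKS L') (σ L' (M₃.map h x)) := h2 }
  refine ⟨S, s, ?_, ?_⟩
  · -- ξ₂ ∘ s is controlled equivalent to the identity
    refine ⟨fun L => F₂ (S L), ⟨ξ₂.ctrl.1.comp hSmono, ξ₂.ctrl.2.comp hStend⟩,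
      fun L => le_refl _, fun L => (hKle L).trans (ξ₂.ctrl.1 (hKS L)), fun L x => ?_⟩
    rw [M₃.map_refl]
    show ξ₂.f (S L) (M₂.map (hKS L) (σ L x)) = M₃.map _ x
    rw [← ξ₂.compat (hKS L) (σ L x), hσ, M₃.map_comp]
  · -- s ∘ ξ₂ is controlled equivalent to the identity
    refine ⟨fun L => T (L ⊔ K (F₂ L)) ⊔ S (F₂ L),
      ⟨(hTmono.comp (monotone_id.sup (hKmono.comp ξ₂.ctrl.1))).sup (hSmono.comp ξ₂.ctrl.1),
        tendsto_atTop_mono (fun L => le_sup_right) (hStend.comp ξ₂.ctrl.2)⟩,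
      fun L => le_sup_right,
      fun L => (le_sup_left.trans (hT (L ⊔ K (F₂ L)))).trans le_sup_left,
      fun L y => ?_⟩
    show M₂.map _ (M₂.map (hKS (F₂ L)) (σ (F₂ L) (ξ₂.f L y))) = M₂.map _ y
    have hKR : K (F₂ L) ≤ L ⊔ K (F₂ L) := le_sup_right
    have hLR : L ≤ L ⊔ K (F₂ L) := le_sup_left
    have hd : ξ₂.f (L ⊔ K (F₂ L))
        (M₂.map hKR (σ (F₂ L) (ξ₂.f L y)) - M₂.map hLR y) = 0 := by
      rw [map_sub, ← ξ₂.compat hKR, hσ, ← ξ₂.compat hLR, M₃.map_comp]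
      exact sub_eq_zero_of_eq rfl
    have h2 := kill (L ⊔ K (F₂ L)) _ hd
    rw [map_sub, sub_eq_zero] at h2
    calc M₂.map _ (M₂.map (hKS (F₂ L)) (σ (F₂ L) (ξ₂.f L y)))
        = M₂.map le_sup_left
            (M₂.map (hT (L ⊔ K (F₂ L))) (M₂.map hKR (σ (F₂ L) (ξ₂.f L y)))) := by
          rw [M₂.map_comp, M₂.map_comp, M₂.map_comp]
      _ = M₂.map le_sup_left
            (M₂.map (hT (L ⊔ K (F₂ L))) (M₂.map hLR y)) := by rw [h2]
      _ = M₂.map _ y := by rw [M₂.map_comp, M₂.map_comp]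
end

section
/- Let m ≥ 1 and let b = (1/(m+1), …, 1/(m+1)) ∈ ℝ^{m+1}. Suppose x, x' ∈ ℝ^{m+1} satisfy: all coordinates of x and of x' are non-negative, the coordinates of x sum to 1 and the coordinates of x' sum to 1, and the minimum coordinate of each is attained at index 0 with x₀ = x'₀ = 1/(3(m+1)). For λ, λ' ∈ [0,1] set y = b + (1 − λ/4)(x − b) and y' = b + (1 − λ'/4)(x' − b). Then ‖y − y'‖₁ ≥ |λ − λ'|/(12(m+1)) and ‖y − y'‖₁ ≥ ‖x − x'‖₁/(9m(m+1)), where ‖·‖₁ denotes the ℓ¹-norm on ℝ^{m+1}. -/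
set_option maxHeartbeats 1600000 in
/-- ℓ¹-norm lower bounds for the radial homotopy in the standard simplex. -/
theorem stmt17 (m : ℕ) (hm : 1 ≤ m)
    (b x x' : Fin (m + 1) → ℝ)
    (hb : ∀ i, b i = 1 / ((m : ℝ) + 1))
    (hx : ∀ i, 0 ≤ x i) (hx' : ∀ i, 0 ≤ x' i)
    (hxs : ∑ i, x i = 1) (hx's : ∑ i, x' i = 1)
    (hxmin : ∀ i, x 0 ≤ x i) (hx'min : ∀ i, x' 0 ≤ x' i)
    (hx0 : x 0 = 1 / (3 * ((m : ℝ) + 1))) (hx'0 : x' 0 = 1 / (3 * ((m : ℝ) + 1)))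
    (lam lam' : ℝ) (hlam : lam ∈ Set.Icc (0 : ℝ) 1) (hlam' : lam' ∈ Set.Icc (0 : ℝ) 1)
    (y y' : Fin (m + 1) → ℝ)
    (hy : ∀ i, y i = b i + (1 - lam / 4) * (x i - b i))
    (hy' : ∀ i, y' i = b i + (1 - lam' / 4) * (x' i - b i)) :
    |lam - lam'| / (12 * ((m : ℝ) + 1)) ≤ ∑ i, |y i - y' i| ∧
      (∑ i, |x i - x' i|) / (9 * (m : ℝ) * ((m : ℝ) + 1)) ≤ ∑ i, |y i - y' i| := by
  obtain ⟨hl0, hl1⟩ := hlam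
  obtain ⟨hl'0, hl'1⟩ := hlam'
  have hm1 : (1 : ℝ) ≤ (m : ℝ) := by exact_mod_cast hm
  have hmpos : (0 : ℝ) < (m : ℝ) + 1 := by linarith
  set A := ∑ i, |y i - y' i| with hA
  set X := ∑ i, |x i - x' i| with hX
  set d := |lam - lam'| with hd
  have hdnn : 0 ≤ d := abs_nonneg _
  have hAnn : 0 ≤ A := Finset.sum_nonneg fun i _ => abs_nonneg _
  have hXnn : 0 ≤ X := Finset.sum_nonneg fun i _ => abs_nonneg _
  have h0le : |y 0 - y' 0| ≤ A :=
    Finset.single_le_sum (f := fun i : Fin (m+1) => |y i - y' i|)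
      (fun i _ => abs_nonneg _) (Finset.mem_univ (0 : Fin (m+1)))
  -- coordinate 0 computation
  have hy0 : y 0 - y' 0 = (lam' - lam) / 4 * (-(2 / (3 * ((m : ℝ) + 1)))) := by
    rw [hy 0, hy' 0, hx0, hx'0, hb 0]
    field_simp
    ring
  have habs0 : |y 0 - y' 0| = d / 4 * (2 / (3 * ((m : ℝ) + 1))) := by
    rw [hy0, abs_mul, abs_neg, abs_div,
      abs_of_pos (show (0:ℝ) < 2 / (3 * ((m : ℝ) + 1)) by positivity),
      abs_sub_comm lam' lam]
    norm_num [hd]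
  -- key: d ≤ 6 (m+1) A
  have hdA : d ≤ 6 * ((m : ℝ) + 1) * A := by
    have h := habs0 ▸ h0le
    have h2 : d * 2 / (3 * ((m : ℝ) + 1)) ≤ 4 * A := by
      rw [mul_div_assoc]; linarith
    rw [div_le_iff₀ (by positivity : (0:ℝ) < 3 * ((m : ℝ) + 1))] at h2
    nlinarith
  constructor
  · rw [div_le_iff₀ (by positivity : (0:ℝ) < 12 * ((m : ℝ) + 1))]
    nlinarith [mul_nonneg hAnn hmpos.le]
  · -- second bound
    have hsumb : ∑ i, b i = 1 := by
      have : ∑ i : Fin (m+1), b i = ∑ _i : Fin (m+1), (1 / ((m : ℝ) + 1)) := by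
        exact Finset.sum_congr rfl fun i _ => hb i
      rw [this, Finset.sum_const, Finset.card_univ, Fintype.card_fin, nsmul_eq_mul]
      push_cast
      field_simp
    have hB : ∑ i, |x' i - b i| ≤ 2 := by
      have : ∀ i ∈ Finset.univ, |x' i - b i| ≤ x' i + b i := by
        intro i _
        have hbnn : 0 ≤ b i := by rw [hb i]; positivity
        calc |x' i - b i| ≤ |x' i| + |b i| := abs_sub _ _
          _ = x' i + b i := by rw [abs_of_nonneg (hx' i), abs_of_nonneg hbnn]
      calc ∑ i, |x' i - b i| ≤ ∑ i, (x' i + b i) := Finset.sum_le_sum this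
        _ = 2 := by rw [Finset.sum_add_distrib, hx's, hsumb]; norm_num
    have hper : ∀ i ∈ Finset.univ, (1 - lam / 4) * |x i - x' i| ≤
        |y i - y' i| + d / 4 * |x' i - b i| := by
      intro i _
      have hs : (0:ℝ) ≤ 1 - lam / 4 := by linarith
      have hdec : (1 - lam / 4) * (x i - x' i) =
          (y i - y' i) - (lam' - lam) / 4 * (x' i - b i) := by
        rw [hy i, hy' i]; ring
      calc (1 - lam / 4) * |x i - x' i| = |(1 - lam / 4) * (x i - x' i)| := by
            rw [abs_mul, abs_of_nonneg hs]
        _ = |(y i - y' i) - (lam' - lam) / 4 * (x' i - b i)| := by rw [hdec]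
        _ ≤ |y i - y' i| + |(lam' - lam) / 4 * (x' i - b i)| := abs_sub _ _
        _ = |y i - y' i| + d / 4 * |x' i - b i| := by
            rw [abs_mul, abs_div, abs_sub_comm lam' lam]; norm_num [hd]
    have hsum : (1 - lam / 4) * X ≤ A + d / 4 * (∑ i, |x' i - b i|) := by
      calc (1 - lam / 4) * X = ∑ i, (1 - lam / 4) * |x i - x' i| := Finset.mul_sum _ _ _
        _ ≤ ∑ i, (|y i - y' i| + d / 4 * |x' i - b i|) := Finset.sum_le_sum hper
        _ = A + d / 4 * (∑ i, |x' i - b i|) := by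
            rw [Finset.sum_add_distrib, ← Finset.mul_sum]
    have hsum2 : (3 / 4 : ℝ) * X ≤ A + d / 2 := by
      have h1 : (3 / 4 : ℝ) * X ≤ (1 - lam / 4) * X := by nlinarith
      have h2 : d / 4 * (∑ i, |x' i - b i|) ≤ d / 2 := by nlinarith
      linarith
    have hm0 : (0:ℝ) ≤ (m:ℝ) := by positivity
    rw [div_le_iff₀ (by positivity : (0:ℝ) < 9 * (m : ℝ) * ((m : ℝ) + 1))]
    have h3 : X ≤ (4/3 + 4 * ((m : ℝ) + 1)) * A := by linarith
    have hc : (4/3 : ℝ) + 4 * ((m : ℝ) + 1) ≤ 9 * (m : ℝ) * ((m : ℝ) + 1) := by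
      nlinarith [hm1]
    calc X ≤ (4/3 + 4 * ((m : ℝ) + 1)) * A := h3
      _ ≤ 9 * (m : ℝ) * ((m : ℝ) + 1) * A := mul_le_mul_of_nonneg_right hc hAnn
      _ = A * (9 * (m : ℝ) * ((m : ℝ) + 1)) := mul_comm _ _
end

section
/- Let m₁, m₂ ≥ 1. Let t, t' ∈ ℝ^{m₁} have non-negative coordinates summing to 1, let s, s' ∈ ℝ^{m₂} have non-negative coordinates summing to 1, and let λ, λ' ∈ [1/2, 1]. Then Σ_{i=1}^{m₁} |λ t_i − λ' t'_i| + Σ_{j=1}^{m₂} |(1−λ) s_j − (1−λ') s'_j| ≥ |λ − λ'|, and Σ_{i=1}^{m₁} |λ t_i − λ' t'_i| + Σ_{j=1}^{m₂} |(1−λ) s_j − (1−λ') s'_j| ≥ (1/(6 m₁)) Σ_{i=1}^{m₁} |t_i − t'_i|. -/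
/-- ℓ¹-distance estimates for joins of simplices. -/
theorem stmt18 (m₁ m₂ : ℕ) (hm₁ : 1 ≤ m₁) (hm₂ : 1 ≤ m₂)
    (t t' : Fin m₁ → ℝ) (s s' : Fin m₂ → ℝ)
    (ht : ∀ i, 0 ≤ t i) (ht' : ∀ i, 0 ≤ t' i)
    (hs : ∀ j, 0 ≤ s j) (hs' : ∀ j, 0 ≤ s' j)
    (hts : ∑ i, t i = 1) (ht's : ∑ i, t' i = 1)
    (hss : ∑ j, s j = 1) (hs's : ∑ j, s' j = 1)
    (lam lam' : ℝ) (hlam : lam ∈ Set.Icc (1 / 2 : ℝ) 1) (hlam' : lam' ∈ Set.Icc (1 / 2 : ℝ) 1) :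
    |lam - lam'| ≤
        (∑ i, |lam * t i - lam' * t' i|) + ∑ j, |(1 - lam) * s j - (1 - lam') * s' j| ∧
      (1 / (6 * (m₁ : ℝ))) * ∑ i, |t i - t' i| ≤
        (∑ i, |lam * t i - lam' * t' i|) + ∑ j, |(1 - lam) * s j - (1 - lam') * s' j| := by
  obtain ⟨hl1, hl2⟩ := hlam
  set A := ∑ i, |lam * t i - lam' * t' i| with hA
  set B := ∑ j, |(1 - lam) * s j - (1 - lam') * s' j| with hB
  have hBnn : 0 ≤ B := Finset.sum_nonneg fun j _ => abs_nonneg _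
  have hlam_eq : lam - lam' = ∑ i, (lam * t i - lam' * t' i) := by
    rw [Finset.sum_sub_distrib, ← Finset.mul_sum, ← Finset.mul_sum, hts, ht's]
    ring
  have h1 : |lam - lam'| ≤ A := by
    rw [hlam_eq]
    exact Finset.abs_sum_le_sum_abs _ _
  refine ⟨le_trans h1 (le_add_of_nonneg_right hBnn), ?_⟩
  have key : (1/2 : ℝ) * ∑ i, |t i - t' i| ≤ A + |lam - lam'| := by
    have hpt : ∀ i, (1/2 : ℝ) * |t i - t' i| ≤
        |lam * t i - lam' * t' i| + |lam - lam'| * t' i := by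
      intro i
      have h3 : lam * |t i - t' i| ≤ |lam * t i - lam' * t' i| + |lam - lam'| * t' i := by
        have : lam * (t i - t' i) = (lam * t i - lam' * t' i) - (lam - lam') * t' i := by ring
        calc lam * |t i - t' i| = |lam * (t i - t' i)| := by
              rw [abs_mul, abs_of_nonneg (by linarith : (0:ℝ) ≤ lam)]
          _ = |(lam * t i - lam' * t' i) - (lam - lam') * t' i| := by rw [this]
          _ ≤ |lam * t i - lam' * t' i| + |(lam - lam') * t' i| := abs_sub _ _
          _ = |lam * t i - lam' * t' i| + |lam - lam'| * t' i := by
              rw [abs_mul, abs_of_nonneg (ht' i)]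
      have h4 : (1/2 : ℝ) * |t i - t' i| ≤ lam * |t i - t' i| := by
        nlinarith [abs_nonneg (t i - t' i)]
      linarith
    calc (1/2 : ℝ) * ∑ i, |t i - t' i| = ∑ i, (1/2 : ℝ) * |t i - t' i| := by
          rw [Finset.mul_sum]
      _ ≤ ∑ i, (|lam * t i - lam' * t' i| + |lam - lam'| * t' i) :=
          Finset.sum_le_sum fun i _ => hpt i
      _ = A + |lam - lam'| * ∑ i, t' i := by
          rw [Finset.sum_add_distrib, ← Finset.mul_sum]
      _ = A + |lam - lam'| := by rw [ht's, mul_one]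
  have hsum4 : ∑ i, |t i - t' i| ≤ 4 * A := by linarith
  have hsnn : 0 ≤ ∑ i, |t i - t' i| := Finset.sum_nonneg fun i _ => abs_nonneg _
  have hm : (1 : ℝ) ≤ (m₁ : ℝ) := by exact_mod_cast hm₁
  have hcoef : (1 / (6 * (m₁ : ℝ))) ≤ 1/4 := by
    rw [div_le_div_iff₀ (by linarith) (by norm_num)]
    linarith
  calc (1 / (6 * (m₁ : ℝ))) * ∑ i, |t i - t' i| ≤ (1/4) * ∑ i, |t i - t' i| :=
        mul_le_mul_of_nonneg_right hcoef hsnn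
    _ ≤ A := by linarith
    _ ≤ A + B := le_add_of_nonneg_right hBnn
end
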